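/- Let α > 0 and define Q : (0,∞) → ℝ by Q(p) = e^{−p^α}. Then for every p > 0 the curvature κ(p) := Q″(p)·Q(p)/Q′(p)² equals 1 + (1 − α)/(α·p^α). Consequently: (i) if α > 1, then κ is strictly increasing on (0,∞) and κ(p) < 1 for all p > 0; (ii) if 0 < α < 1, then κ(p) → +∞ as p → 0⁺, so κ(p) > 2 for all sufficiently small p > 0. -/

import Mathlib

open Filter

/-- Weibull demand `Q(p) = e^{-p^α}`. -/
noncomputable def Qweibull (α : ℝ) (p : ℝ) : ℝ := Real.exp (-(p ^ α))

/-- Curvature of Weibull demand: `κ(p) = Q''(p)·Q(p)/Q'(p)²`. -/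
noncomputable def κweibull (α : ℝ) (p : ℝ) : ℝ :=
  deriv (deriv (Qweibull α)) p * Qweibull α p / (deriv (Qweibull α) p) ^ 2

/-- First derivative of Weibull demand on `(0,∞)`. -/
noncomputable def Dweibull (α : ℝ) (p : ℝ) : ℝ :=
  -(α * p ^ (α - 1)) * Real.exp (-(p ^ α))

lemma hasDerivAt_Q (α : ℝ) {p : ℝ} (hp : 0 < p) :
    HasDerivAt (Qweibull α) (Dweibull α p) p := by
  have h1 : HasDerivAt (fun x : ℝ => x ^ α) (α * p ^ (α - 1)) p :=
    Real.hasDerivAt_rpow_const (Or.inl hp.ne')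
  have h2 := (h1.neg).exp
  convert h2 using 1
  · rfl
  · simp [Dweibull]
    ring

lemma deriv_Q_eq (α : ℝ) {p : ℝ} (hp : 0 < p) :
    deriv (Qweibull α) =ᶠ[nhds p] Dweibull α := by
  filter_upwards [isOpen_Ioi.mem_nhds hp] with q hq
  exact (hasDerivAt_Q α hq).deriv

lemma hasDerivAt_D (α : ℝ) {p : ℝ} (hp : 0 < p) :
    HasDerivAt (Dweibull α)
      (-(α * ((α - 1) * p ^ (α - 1 - 1))) * Real.exp (-(p ^ α)) +
        -(α * p ^ (α - 1)) * Dweibull α p) p := by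
  have h1 : HasDerivAt (fun x : ℝ => -(α * x ^ (α - 1))) (-(α * ((α - 1) * p ^ (α - 1 - 1)))) p := by
    have := (Real.hasDerivAt_rpow_const (x := p) (p := α - 1) (Or.inl hp.ne')).const_mul α
    exact this.neg
  have h2 : HasDerivAt (fun x : ℝ => Real.exp (-(x ^ α))) (Dweibull α p) p := hasDerivAt_Q α hp
  exact h1.mul h2

/-- **Curvature of Weibull demand.**  For `α > 0` and `p > 0`,
`κ(p) = 1 + (1-α)/(α·p^α)`.  (i) If `α > 1`, `κ` is strictly increasing on `(0,∞)` and
everywhere `< 1` there; (ii) if `α < 1`, `κ(p) → +∞` as `p → 0⁺`, so `κ(p) > 2` for all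
sufficiently small `p > 0`. -/
theorem stmt18 (α : ℝ) (hα : 0 < α) :
    (∀ p > (0 : ℝ), κweibull α p = 1 + (1 - α) / (α * p ^ α)) ∧
    (1 < α → StrictMonoOn (κweibull α) (Set.Ioi 0) ∧ ∀ p > (0 : ℝ), κweibull α p < 1) ∧
    (α < 1 → Tendsto (κweibull α) (nhdsWithin 0 (Set.Ioi 0)) atTop ∧
      ∃ δ > (0 : ℝ), ∀ p ∈ Set.Ioo (0 : ℝ) δ, 2 < κweibull α p) := by
  have key : ∀ p > (0 : ℝ), κweibull α p = 1 + (1 - α) / (α * p ^ α) := by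
    intro p hp
    have hd1 : deriv (Qweibull α) p = Dweibull α p := (hasDerivAt_Q α hp).deriv
    have hd2 : deriv (deriv (Qweibull α)) p =
        -(α * ((α - 1) * p ^ (α - 1 - 1))) * Real.exp (-(p ^ α)) +
          -(α * p ^ (α - 1)) * Dweibull α p := by
      rw [Filter.EventuallyEq.deriv_eq (deriv_Q_eq α hp)]
      exact (hasDerivAt_D α hp).deriv
    have hE : Real.exp (-(p ^ α)) ≠ 0 := Real.exp_ne_zero _
    have ht : (0:ℝ) < p ^ α := Real.rpow_pos_of_pos hp α
    have hp1 : p ^ (α - 1) = p ^ α / p := by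
      rw [Real.rpow_sub hp, Real.rpow_one]
    have hp2 : p ^ (α - 1 - 1) = p ^ α / (p * p) := by
      rw [Real.rpow_sub hp, Real.rpow_sub hp, Real.rpow_one]
      ring
    unfold κweibull
    rw [hd1, hd2]
    unfold Dweibull Qweibull
    rw [hp1, hp2]
    field_simp
    ring
  refine ⟨key, ?_, ?_⟩
  · intro hα1
    constructor
    · intro p hp q hq hpq
      rw [key p hp, key q hq]
      have h1 : (0:ℝ) < α * p ^ α := mul_pos hα (Real.rpow_pos_of_pos hp α)
      have h2 : α * p ^ α < α * q ^ α := by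
        have := Real.rpow_lt_rpow (le_of_lt hp) hpq hα
        nlinarith
      have := div_lt_div_of_pos_left (by linarith : (0:ℝ) < α - 1) h1 h2
      have e1 : (1 - α) / (α * p ^ α) = -((α - 1) / (α * p ^ α)) := by ring
      have e2 : (1 - α) / (α * q ^ α) = -((α - 1) / (α * q ^ α)) := by ring
      rw [e1, e2]
      linarith
    · intro p hp
      rw [key p hp]
      have h1 : (0:ℝ) < α * p ^ α := mul_pos hα (Real.rpow_pos_of_pos hp α)
      have : (1 - α) / (α * p ^ α) < 0 := div_neg_of_neg_of_pos (by linarith) h1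
      linarith
  · intro hα1
    have htend : Tendsto (κweibull α) (nhdsWithin 0 (Set.Ioi 0)) atTop := by
      have h0 : Tendsto (fun p : ℝ => α * p ^ α) (nhdsWithin 0 (Set.Ioi 0)) (nhdsWithin 0 (Set.Ioi 0)) := by
        rw [tendsto_nhdsWithin_iff]
        constructor
        · have hc : Tendsto (fun p : ℝ => p ^ α) (nhdsWithin 0 (Set.Ioi 0)) (nhds 0) := by
            have := (Real.continuousAt_rpow_const 0 α (Or.inr hα.le)).continuousWithinAt (s := Set.Ioi 0)
            simpa [Real.zero_rpow hα.ne'] using this.tendsto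
          simpa using (hc.const_mul α)
        · filter_upwards [self_mem_nhdsWithin] with p hp
          exact mul_pos hα (Real.rpow_pos_of_pos hp α)
      have hinv : Tendsto (fun x : ℝ => (1 - α) * x⁻¹) (nhdsWithin 0 (Set.Ioi 0)) atTop :=
        (tendsto_inv_nhdsGT_zero).const_mul_atTop (by linarith)
      have hmain : Tendsto (fun p : ℝ => 1 + (1 - α) / (α * p ^ α)) (nhdsWithin 0 (Set.Ioi 0)) atTop := by
        apply tendsto_atTop_add_const_left
        exact (hinv.comp h0).congr fun p => by
          simp only [Function.comp, div_eq_mul_inv]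
      apply hmain.congr'
      filter_upwards [self_mem_nhdsWithin] with p hp
      exact (key p hp).symm
    refine ⟨htend, ?_⟩
    have hev : ∀ᶠ p in nhdsWithin 0 (Set.Ioi 0), 2 < κweibull α p :=
      htend.eventually_gt_atTop 2
    rw [eventually_nhdsWithin_iff, Metric.eventually_nhds_iff] at hev
    obtain ⟨ε, hε, h⟩ := hev
    refine ⟨ε, hε, fun p hp => ?_⟩
    exact h (by simp [abs_of_pos hp.1, hp.2, sub_zero]) hp.1
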